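/- Assume ∫_τ^∞ ds/r(s) = ∞. Let x be a solution of (E) and let M ≥ τ be such that x(t) ≥ 0 for all t ≥ M. Then there exists N ∈ ℕ such that x′(t_k) ≥ 0 for all k ≥ N. -/

import Mathlib

open MeasureTheory Set Filter

theorem stmt0
    (t ζ : ℕ → ℝ) (ht_mono : StrictMono t)
    (ht_top : Tendsto t atTop atTop)
    (hζ : ∀ k : ℕ, ζ k ∈ Icc (t k) (t (k+1)))
    (r : ℝ → ℝ) (hr_cont : ContinuousOn r (Ici (t 0)))
    (hr_pos : ∀ s ∈ Ici (t 0), 0 < r s)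
    (f : ℝ → ℝ → ℝ)
    (hf_cont : ContinuousOn (fun q : ℝ × ℝ => f q.1 q.2) ((Ici (t 0)) ×ˢ (univ : Set ℝ)))
    (hf_sign : ∀ s ∈ Ici (t 0), ∀ y : ℝ, y ≠ 0 → 0 < y * f s y)
    (x x' : ℝ → ℝ)
    (hx_deriv : ∀ s ∈ Ici (t 0), HasDerivAt x (x' s) s)
    (hx'_cont : ContinuousOn x' (Ici (t 0)))
    (hE : ∀ k : ℕ, ∀ s ∈ Ioo (t k) (t (k+1)),
      HasDerivAt (fun u => r u * x' u) (-(f s (x (ζ k)))) s)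
    (hr_int : ∫⁻ s in Ioi (t 0), ENNReal.ofReal (1 / r s) = ⊤)
    (M : ℝ) (hM : t 0 ≤ M) (hxM : ∀ s : ℝ, M ≤ s → 0 ≤ x s) :
    ∃ N : ℕ, ∀ k : ℕ, N ≤ k → 0 ≤ x' (t k) := by
  have ht0 : ∀ k, t 0 ≤ t k := fun k => ht_mono.monotone (Nat.zero_le k)
  obtain ⟨N0, hN0⟩ := eventually_atTop.mp (ht_top.eventually_ge_atTop M)
  -- f s y ≥ 0 for y ≥ 0
  have hfnn : ∀ s ∈ Ici (t 0), ∀ y : ℝ, 0 ≤ y → 0 ≤ f s y := by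
    intro s hs y hy
    have hgc : Continuous (fun y => f s y) := by
      rw [← continuousOn_univ]
      exact hf_cont.comp ((continuous_const.prodMk continuous_id).continuousOn)
        (fun y _ => ⟨hs, mem_univ _⟩)
    have hpos : ∀ z : ℝ, 0 < z → 0 < f s z := by
      intro z hz
      rcases mul_pos_iff.mp (hf_sign s hs z hz.ne') with h | h
      · exact h.2
      · linarith [h.1]
    rcases eq_or_lt_of_le hy with h | h
    · have h0 : (0:ℝ) ≤ f s 0 := by
        have htend : Tendsto (fun z => f s z) (nhdsWithin 0 (Ioi 0)) (nhds (f s 0)) :=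
          (hgc.tendsto 0).mono_left nhdsWithin_le_nhds
        refine ge_of_tendsto htend ?_
        filter_upwards [self_mem_nhdsWithin] with z hz
        exact (hpos z hz).le
      rw [← h]; exact h0
    · exact (hpos y h).le
  refine ⟨N0 + 1, fun k hk => ?_⟩
  by_contra hneg
  push_neg at hneg
  have hk0 : 0 < k := lt_of_lt_of_le (Nat.succ_pos N0) hk
  have htk0 : t 0 < t k := ht_mono hk0
  have hN0k : N0 ≤ k := le_trans (Nat.le_succ N0) hk
  have hMk : M ≤ t k := hN0 k hN0k
  -- antitone on each interval beyond N0
  have hA : ∀ j, N0 ≤ j → AntitoneOn (fun u => r u * x' u) (Icc (t j) (t (j+1))) := by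
    intro j hj
    have hsub : Icc (t j) (t (j+1)) ⊆ Ici (t 0) := fun s hs => le_trans (ht0 j) hs.1
    apply antitoneOn_of_deriv_nonpos (convex_Icc _ _)
    · exact (hr_cont.mono hsub).mul (hx'_cont.mono hsub)
    · rw [interior_Icc]
      exact fun s hs => ((hE j s hs).differentiableAt).differentiableWithinAt
    · rw [interior_Icc]
      intro s hs
      rw [(hE j s hs).deriv]
      have hx0 : 0 ≤ x (ζ j) := hxM _ (le_trans (hN0 j hj) (hζ j).1)
      have := hfnn s (le_trans (ht0 j) hs.1.le) _ hx0
      linarith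
  set c := r (t k) * x' (t k) with hcdef
  have hrk : 0 < r (t k) := hr_pos _ (ht0 k)
  have hc : c < 0 := mul_neg_of_pos_of_neg hrk hneg
  -- chain the antitonicity
  have hchain : ∀ m, ∀ s ∈ Icc (t k) (t (k+m)), r s * x' s ≤ c := by
    intro m
    induction m with
    | zero =>
      intro s hs
      have : s = t k := le_antisymm hs.2 hs.1
      rw [this]
    | succ m ih =>
      intro s hs
      rcases le_or_gt s (t (k+m)) with h | h
      · exact ih s ⟨hs.1, h⟩
      · have hmem1 : t (k+m) ∈ Icc (t (k+m)) (t (k+m+1)) :=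
          ⟨le_rfl, (ht_mono (Nat.lt_succ_self _)).le⟩
        have hmem2 : s ∈ Icc (t (k+m)) (t (k+m+1)) := ⟨h.le, hs.2⟩
        have h1 : r s * x' s ≤ r (t (k+m)) * x' (t (k+m)) :=
          hA (k+m) (le_trans hN0k (Nat.le_add_right k m)) hmem1 hmem2 h.le
        exact le_trans h1 (ih (t (k+m)) ⟨ht_mono.monotone (Nat.le_add_right k m), le_rfl⟩)
  have hge : ∀ s, t k ≤ s → r s * x' s ≤ c := by
    intro s hs
    obtain ⟨n, hn1, hn2⟩ := ((ht_top.eventually_ge_atTop s).and (eventually_ge_atTop k)).exists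
    refine hchain (n - k) s ⟨hs, ?_⟩
    rwa [Nat.add_sub_cancel' hn2]
  have hx'le : ∀ s, t k ≤ s → x' s ≤ c * (1 / r s) := by
    intro s hs
    have hrs : 0 < r s := hr_pos s (le_trans (ht0 k) hs)
    rw [mul_one_div, le_div_iff₀ hrs]
    have := hge s hs
    linarith
  -- fundamental theorem of calculus estimate
  have hFTC : ∀ T, t k ≤ T → x T ≤ x (t k) + c * ∫ s in (t k)..T, 1 / r s := by
    intro T hT
    have hsub : Icc (t k) T ⊆ Ici (t 0) := fun s hs => le_trans (ht0 k) hs.1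
    have hi1 : IntervalIntegrable x' volume (t k) T :=
      (hx'_cont.mono hsub).intervalIntegrable_of_Icc hT
    have heq : (∫ s in (t k)..T, x' s) = x T - x (t k) := by
      apply intervalIntegral.integral_eq_sub_of_hasDerivAt
      · intro s hs
        rw [uIcc_of_le hT] at hs
        exact hx_deriv s (hsub hs)
      · exact hi1
    have hrC : ContinuousOn (fun s => c * (1 / r s)) (Icc (t k) T) :=
      continuousOn_const.mul (continuousOn_const.div (hr_cont.mono hsub)
        (fun s hs => (hr_pos s (hsub hs)).ne'))
    have hi2 : IntervalIntegrable (fun s => c * (1 / r s)) volume (t k) T :=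
      hrC.intervalIntegrable_of_Icc hT
    have hmono : (∫ s in (t k)..T, x' s) ≤ ∫ s in (t k)..T, c * (1 / r s) :=
      intervalIntegral.integral_mono_on hT hi1 hi2 (fun s hs => hx'le s hs.1)
    rw [intervalIntegral.integral_const_mul] at hmono
    linarith
  -- divergence of the integral of 1/r
  have hxk : 0 ≤ x (t k) := hxM _ hMk
  set C := x (t k) / (-c) with hCdef
  have hdiv : ∃ T, max M (t k) ≤ T ∧ C < ∫ s in (t k)..T, 1 / r s := by
    by_contra hcon
    push_neg at hcon
    have hb : Tendsto (fun n : ℕ => max M (t k) + n) atTop atTop :=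
      tendsto_atTop_add_const_left _ _ tendsto_natCast_atTop_atTop
    have hbk : ∀ n : ℕ, t k ≤ max M (t k) + n := fun n =>
      le_trans (le_max_right M (t k)) (le_add_of_nonneg_right (Nat.cast_nonneg n))
    have hfi : ∀ n : ℕ, IntegrableOn (fun s => 1 / r s) (Ioc (t k) (max M (t k) + n)) volume := by
      intro n
      have hsub : Icc (t k) (max M (t k) + n) ⊆ Ici (t 0) := fun s hs => le_trans (ht0 k) hs.1
      have : ContinuousOn (fun s => 1 / r s) (Icc (t k) (max M (t k) + n)) :=
        continuousOn_const.div (hr_cont.mono hsub) (fun s hs => (hr_pos s (hsub hs)).ne')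
      exact (this.integrableOn_Icc).mono_set Ioc_subset_Icc_self
    have hint : IntegrableOn (fun s => 1 / r s) (Ioi (t k)) volume := by
      apply integrableOn_Ioi_of_intervalIntegral_norm_bounded C (t k) hfi hb
      filter_upwards with n
      have heq : (∫ s in (t k)..(max M (t k) + n), ‖1 / r s‖) =
          ∫ s in (t k)..(max M (t k) + n), 1 / r s := by
        apply intervalIntegral.integral_congr
        intro s hs
        rw [uIcc_of_le (hbk n)] at hs
        have hrp : 0 < r s := hr_pos s (le_trans (ht0 k) hs.1)
        show ‖1 / r s‖ = 1 / r s
        rw [Real.norm_eq_abs, abs_of_pos (one_div_pos.mpr hrp)]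
      rw [heq]
      exact hcon _ (le_add_of_nonneg_right (Nat.cast_nonneg n))
    -- but the lintegral over Ioi (t k) is infinite
    have hIoc : IntegrableOn (fun s => 1 / r s) (Ioc (t 0) (t k)) volume := by
      have hsub : Icc (t 0) (t k) ⊆ Ici (t 0) := fun s hs => hs.1
      have : ContinuousOn (fun s => 1 / r s) (Icc (t 0) (t k)) :=
        continuousOn_const.div (hr_cont.mono hsub) (fun s hs => (hr_pos s (hsub hs)).ne')
      exact (this.integrableOn_Icc).mono_set Ioc_subset_Icc_self
    have hfin1 : (∫⁻ s in Ioc (t 0) (t k), ENNReal.ofReal (1 / r s)) < ⊤ :=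
      (lintegral_ofReal_le_lintegral_enorm _).trans_lt hIoc.2
    have hfin2 : (∫⁻ s in Ioi (t k), ENNReal.ofReal (1 / r s)) < ⊤ :=
      (lintegral_ofReal_le_lintegral_enorm _).trans_lt hint.2
    have hunion : Ioc (t 0) (t k) ∪ Ioi (t k) = Ioi (t 0) := Ioc_union_Ioi_eq_Ioi htk0.le
    have hsplit : (∫⁻ s in Ioi (t 0), ENNReal.ofReal (1 / r s)) =
        (∫⁻ s in Ioc (t 0) (t k), ENNReal.ofReal (1 / r s)) +
        (∫⁻ s in Ioi (t k), ENNReal.ofReal (1 / r s)) := by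
      rw [← hunion, lintegral_union measurableSet_Ioi (Ioc_disjoint_Ioi le_rfl)]
    rw [hr_int] at hsplit
    have hlt := ENNReal.add_lt_top.mpr ⟨hfin1, hfin2⟩
    rw [← hsplit] at hlt
    exact lt_irrefl _ hlt
  obtain ⟨T, hT1, hT2⟩ := hdiv
  have hxT := hFTC T (le_trans (le_max_right M (t k)) hT1)
  have hxTnn : 0 ≤ x T := hxM T (le_trans (le_max_left _ _) hT1)
  have hlt : c * (∫ s in (t k)..T, 1 / r s) < c * C := mul_lt_mul_of_neg_left hT2 hc
  have hcC : c * C = - x (t k) := by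
    have hC' : C * (-c) = x (t k) := by
      rw [hCdef]
      exact div_mul_cancel₀ _ (neg_ne_zero.mpr hc.ne)
    rw [← hC']
    ring
  linarith
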